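/- Let 0 < r₁ < 1, r₂ = √(1−r₁²), f₁(t) = r₁ sin(t/r₁), f₂(t) = r₁ cos(t/r₁), θ(t) = −t/r₁. Then g := f₂ cos θ − f₁ sin θ = r₁ identically, h := √(1−g²) = r₂, and f₃ := √(1−f₁²−f₂²) = r₂; moreover if these functions satisfy θ' = (h²/(f₃² f₂))(ℓ cos θ − n f₂ g + n H f₂ h) for all t with f₂(t) > 0, then |H| = |ℓ+1 − n r₁²|/(n r₁ r₂). -/

import Mathlib

theorem stmt_8 (ℓ m : ℕ) (hℓ : 0 < ℓ) (hm : 0 < m) (H r₁ : ℝ)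
    (h0 : 0 < r₁) (h1 : r₁ < 1)
    (f₁ f₂ θ : ℝ → ℝ)
    (hf₁ : ∀ t, f₁ t = r₁ * Real.sin (t / r₁))
    (hf₂ : ∀ t, f₂ t = r₁ * Real.cos (t / r₁))
    (hθ : ∀ t, θ t = -(t / r₁)) :
    (∀ t, f₂ t * Real.cos (θ t) - f₁ t * Real.sin (θ t) = r₁) ∧
    (∀ t, Real.sqrt (1 - (f₂ t * Real.cos (θ t) - f₁ t * Real.sin (θ t))^2)
        = Real.sqrt (1 - r₁^2)) ∧
    (∀ t, Real.sqrt (1 - (f₁ t)^2 - (f₂ t)^2) = Real.sqrt (1 - r₁^2)) ∧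
    ((∀ t, f₂ t > 0 →
      deriv θ t =
        (1 - (f₂ t * Real.cos (θ t) - f₁ t * Real.sin (θ t))^2) /
          ((1 - (f₁ t)^2 - (f₂ t)^2) * f₂ t) *
        ((ℓ : ℝ) * Real.cos (θ t)
          - (ℓ + m + 1 : ℝ) * f₂ t * (f₂ t * Real.cos (θ t) - f₁ t * Real.sin (θ t))
          + (ℓ + m + 1 : ℝ) * H * f₂ t *
              Real.sqrt (1 - (f₂ t * Real.cos (θ t) - f₁ t * Real.sin (θ t))^2))) →
      |H| = |(ℓ : ℝ) + 1 - (ℓ + m + 1 : ℝ) * r₁^2| /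
        ((ℓ + m + 1 : ℝ) * r₁ * Real.sqrt (1 - r₁^2))) := by
  have hg : ∀ t, f₂ t * Real.cos (θ t) - f₁ t * Real.sin (θ t) = r₁ := by
    intro t
    rw [hf₁, hf₂, hθ, Real.cos_neg, Real.sin_neg]
    have := Real.sin_sq_add_cos_sq (t / r₁)
    nlinarith [this]
  refine ⟨hg, fun t => by rw [hg t], ?_, ?_⟩
  · intro t
    rw [hf₁, hf₂]
    have := Real.sin_sq_add_cos_sq (t / r₁)
    congr 1
    nlinarith [this]
  · intro heq
    set s := Real.sqrt (1 - r₁^2) with hs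
    have h1r : (0:ℝ) < 1 - r₁^2 := by nlinarith
    have hspos : 0 < s := Real.sqrt_pos.mpr h1r
    have hssq : s^2 = 1 - r₁^2 := Real.sq_sqrt h1r.le
    set n : ℝ := (ℓ + m + 1 : ℝ) with hn
    have hnpos : (0:ℝ) < n := by positivity
    have hθ0 : θ 0 = 0 := by rw [hθ]; simp
    have hf₁0 : f₁ 0 = 0 := by rw [hf₁]; simp
    have hf₂0 : f₂ 0 = r₁ := by rw [hf₂]; simp
    have hd : deriv θ 0 = -(1 / r₁) := by
      have h : HasDerivAt θ (-(1 / r₁)) 0 := by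
        have : HasDerivAt (fun t : ℝ => -(t / r₁)) (-(1 / r₁)) 0 :=
          ((hasDerivAt_id 0).div_const r₁).neg
        exact this.congr_of_eventuallyEq (Filter.Eventually.of_forall fun x => (hθ x))
      exact h.deriv
    have h2 := heq 0 (by rw [hf₂0]; exact h0)
    rw [hd, hθ0, hf₁0, hf₂0] at h2
    simp only [Real.cos_zero, Real.sin_zero, mul_one, mul_zero, sub_zero] at h2
    rw [← hs] at h2
    -- h2 : -(1/r₁) = (1 - r₁^2)/((1 - 0^2 - r₁^2) * r₁) * (ℓ - n * r₁ * r₁ + n * H * r₁ * s)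
    have key : n * H * r₁ * s = n * r₁^2 - ((ℓ:ℝ) + 1) := by
      have hr₁ : r₁ ≠ 0 := ne_of_gt h0
      have h1r' : (1 - r₁^2) ≠ 0 := ne_of_gt h1r
      field_simp at h2
      have h3 : (1 - r₁^2) * r₁ * ((ℓ:ℝ) - n * r₁ * r₁ + n * H * r₁ * s + 1) = 0 := by
        rw [show (1:ℝ) - 0^2 - r₁^2 = 1 - r₁^2 by ring, mul_div_cancel_left₀ _ h1r'] at h2
        linear_combination (-(1 - r₁^2) * r₁) * h2
      have h4 : ((ℓ:ℝ) - n * r₁ * r₁ + n * H * r₁ * s + 1) = 0 := by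
        rcases mul_eq_zero.mp h3 with h | h
        · exact absurd h (mul_ne_zero h1r' hr₁)
        · exact h
      nlinarith [h4]
    have hH : H = (n * r₁^2 - ((ℓ:ℝ) + 1)) / (n * r₁ * s) := by
      have hden : n * r₁ * s ≠ 0 := by positivity
      field_simp
      linarith [key]
    rw [hH, abs_div, abs_of_pos (by positivity : (0:ℝ) < n * r₁ * s)]
    congr 1
    rw [← abs_neg]
    ring_nf
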